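/- Let W₁,...,W_m be independent with W_i ~ χ²_{n−i+1} (n ≥ m), let c ≤ m, and let Z be an (m−c)×(m−c) matrix of i.i.d. standard Gaussians independent of (W₁,...,W_m). Then D := (∏_{i=1}^{c} W_i) · (∏_{i=c+1}^{m} √(W_i)) · det(Z) satisfies E[D²] = (n!/(n−m)!) · ((n+2)!/(n+2−c)!) · (m−c)!. -/

import Mathlib

open Matrix Finset MeasureTheory ProbabilityTheory Real
open scoped NNReal ENNReal

namespace WishartAux

variable {Ω : Type*} [MeasurableSpace Ω] {μ : Measure Ω}

lemma iIndepFun_precomp {ι κ : Type*} {f : ι → Ω → ℝ}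
    (g : κ → ι) (hg : Function.Injective g)
    (h : iIndepFun f μ) :
    iIndepFun (fun k => f (g k)) μ := by
  classical
  rw [iIndepFun_iff_measure_inter_preimage_eq_mul] at h ⊢
  intro S sets hsets
  set sets' : ι → Set ℝ := fun i => ⋂ k ∈ S.filter (fun k => g k = i), sets k with hsets'
  have hkey : ∀ k ∈ S, sets' (g k) = sets k := by
    intro k hk
    have hfilt : S.filter (fun k' => g k' = g k) = {k} := by
      ext k'
      simp only [Finset.mem_filter, Finset.mem_singleton, hg.eq_iff]
      exact ⟨fun h' => h'.2, fun h' => ⟨h' ▸ hk, h'⟩⟩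
    simp only [hsets']
    rw [hfilt]
    simp
  have hmeas : ∀ i ∈ S.image g, MeasurableSet (sets' i) := by
    intro i _
    exact MeasurableSet.biInter (S.filter (fun k => g k = i)).countable_toSet
      (fun k hk => hsets k (Finset.mem_filter.mp hk).1)
  have := h (S.image g) hmeas
  rw [Finset.set_biInter_finset_image, Finset.prod_image (fun a _ b _ hab => hg hab)] at this
  rw [Set.iInter₂_congr (fun k hk => by rw [hkey k hk]),
    Finset.prod_congr rfl (fun k hk => by rw [hkey k hk])] at this
  exact this

lemma integrable_finset_prod {ι : Type*} [IsProbabilityMeasure μ] {f : ι → Ω → ℝ}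
    (h : iIndepFun f μ)
    (hm : ∀ i, Measurable (f i)) (hint : ∀ i, Integrable (f i) μ) (s : Finset ι) :
    Integrable (fun ω => ∏ i ∈ s, f i ω) μ := by
  classical
  induction s using Finset.induction with
  | empty => simpa using integrable_const (1 : ℝ)
  | @insert j s hj ih =>
    have hprod : IndepFun (f j) (∏ i ∈ s, f i) μ :=
      (h.indepFun_finset_prod_of_notMem hm hj).symm
    have hP : (∏ i ∈ s, f i) = fun ω => ∏ i ∈ s, f i ω := by
      funext ω; simp
    have := hprod.integrable_mul (hint j) (hP ▸ ih)
    have heq : (f j * ∏ i ∈ s, f i) = fun ω => ∏ i ∈ insert j s, f i ω := by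
      funext ω; simp [Finset.prod_insert hj]
    exact heq ▸ this

lemma integral_finset_prod {ι : Type*} [IsProbabilityMeasure μ] {f : ι → Ω → ℝ}
    (h : iIndepFun f μ)
    (hm : ∀ i, Measurable (f i)) (s : Finset ι) :
    ∫ ω, ∏ i ∈ s, f i ω ∂μ = ∏ i ∈ s, ∫ ω, f i ω ∂μ := by
  classical
  induction s using Finset.induction with
  | empty => simp
  | @insert j s hj ih =>
    have hprod : IndepFun (f j) (∏ i ∈ s, f i) μ :=
      (h.indepFun_finset_prod_of_notMem hm hj).symm
    have hPm : Measurable (fun ω => ∏ i ∈ s, f i ω) :=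
      Finset.measurable_prod s (fun i _ => hm i)
    have hP : (∏ i ∈ s, f i) = fun ω => ∏ i ∈ s, f i ω := by funext ω; simp
    have := hprod.integral_mul_eq_mul_integral (hm j).aestronglyMeasurable
      (hP ▸ hPm.aestronglyMeasurable)
    rw [Finset.prod_insert hj, ← ih]
    calc ∫ ω, ∏ i ∈ insert j s, f i ω ∂μ
        = ∫ ω, (f j * ∏ i ∈ s, f i) ω ∂μ := by
          congr 1; funext ω; simp [Finset.prod_insert hj]
      _ = (∫ ω, f j ω ∂μ) * ∫ ω, (∏ i ∈ s, f i) ω ∂μ := this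
      _ = (∫ ω, f j ω ∂μ) * ∫ ω, ∏ i ∈ s, f i ω ∂μ := by simp

lemma integral_withDensity_ofReal {p : ℝ → ℝ} (hp : Measurable p) (hp0 : ∀ x, 0 ≤ p x)
    (g : ℝ → ℝ) :
    ∫ x, g x ∂(MeasureTheory.volume.withDensity (fun x => ENNReal.ofReal (p x)))
      = ∫ x, p x * g x := by
  have h1 : (fun x => ENNReal.ofReal (p x))
      = fun x => (((fun x => (p x).toNNReal) x : ℝ≥0) : ℝ≥0∞) := rfl
  rw [h1, integral_withDensity_eq_integral_smul hp.real_toNNReal g]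
  congr 1
  funext x
  simp [NNReal.smul_def, Real.coe_toNNReal _ (hp0 x)]

lemma integrable_withDensity_ofReal {p : ℝ → ℝ} (hp : Measurable p) (hp0 : ∀ x, 0 ≤ p x)
    {g : ℝ → ℝ} (hg : Integrable (fun x => p x * g x)) :
    Integrable g (MeasureTheory.volume.withDensity (fun x => ENNReal.ofReal (p x))) := by
  have h1 : (fun x => ENNReal.ofReal (p x))
      = fun x => (((fun x => (p x).toNNReal) x : ℝ≥0) : ℝ≥0∞) := rfl
  rw [h1, integrable_withDensity_iff_integrable_smul hp.real_toNNReal]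
  refine hg.congr ?_
  filter_upwards with x
  simp [NNReal.smul_def, Real.coe_toNNReal _ (hp0 x)]

lemma integral_pow_gammaMeasure {a r : ℝ} (ha : 0 < a) (hr : 0 < r) {k : ℕ} (hk : 1 ≤ k) :
    ∫ x, x ^ k ∂(gammaMeasure a r) = Real.Gamma (a + k) / (Real.Gamma a * r ^ k) := by
  rw [gammaMeasure, show gammaPDF a r = fun x => ENNReal.ofReal (gammaPDFReal a r x) from rfl,
    integral_withDensity_ofReal (measurable_gammaPDFReal a r) (gammaPDFReal_nonneg ha hr) _]
  have hzero : ∀ x ∉ Set.Ioi (0:ℝ), gammaPDFReal a r x * x ^ k = 0 := by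
    intro x hx
    simp only [Set.mem_Ioi, not_lt] at hx
    rcases lt_or_eq_of_le hx with h | h
    · simp [gammaPDFReal, not_le.mpr h]
    · subst h
      simp [zero_pow (by omega : k ≠ 0)]
  rw [← setIntegral_eq_integral_of_forall_compl_eq_zero hzero]
  have hcong : ∀ x ∈ Set.Ioi (0:ℝ), gammaPDFReal a r x * x ^ k
      = (r ^ a / Real.Gamma a) * (x ^ (a + (k:ℝ) - 1) * Real.exp (-(r * x))) := by
    intro x hx
    have hx0 : (0:ℝ) < x := hx
    simp only [gammaPDFReal, if_pos hx0.le]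
    rw [show a + (k:ℝ) - 1 = (a - 1) + (k:ℝ) by ring, Real.rpow_add hx0,
      ← Real.rpow_natCast x k]
    ring
  rw [setIntegral_congr_fun measurableSet_Ioi hcong, integral_const_mul,
    integral_rpow_mul_exp_neg_mul_Ioi (by positivity) hr]
  have hΓ : Real.Gamma a ≠ 0 := (Real.Gamma_pos_of_pos ha).ne'
  have h2 : (1/r) ^ (a + (k:ℝ)) = (r ^ a * r ^ k)⁻¹ := by
    rw [one_div, Real.inv_rpow hr.le, Real.rpow_add hr, Real.rpow_natCast]
  rw [h2]
  have hra : (r:ℝ) ^ a ≠ 0 := (Real.rpow_pos_of_pos hr a).ne'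
  have hrk : (r:ℝ) ^ k ≠ 0 := (pow_pos hr k).ne'
  field_simp

lemma integral_sqrt_sq_gammaMeasure {a r : ℝ} :
    ∫ x, Real.sqrt x ^ 2 ∂(gammaMeasure a r) = ∫ x, x ^ 1 ∂(gammaMeasure a r) := by
  refine integral_congr_ae ?_
  have hae : ∀ᵐ x ∂(gammaMeasure a r), 0 ≤ x := by
    rw [ae_iff]
    have : {x : ℝ | ¬ 0 ≤ x} = Set.Iio 0 := by ext x; simp
    rw [this, gammaMeasure, withDensity_apply _ measurableSet_Iio]
    rw [setLIntegral_congr_fun measurableSet_Iio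
      (fun x (hx : x < 0) => gammaPDF_of_neg hx)]
    simp
  filter_upwards [hae] with x hx
  rw [Real.sq_sqrt hx, pow_one]

lemma gaussianReal_eq_withDensity :
    gaussianReal 0 1 = MeasureTheory.volume.withDensity
      (fun x => ENNReal.ofReal (gaussianPDFReal 0 1 x)) := by
  rw [gaussianReal_of_var_ne_zero 0 one_ne_zero]
  rfl

lemma integrable_pdf_mul_pow_gaussian (k : ℕ) :
    Integrable (fun x : ℝ => gaussianPDFReal 0 1 x * x ^ k) := by
  have h := integrable_rpow_mul_exp_neg_mul_sq (by norm_num : (0:ℝ) < 1/2)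
    (lt_of_lt_of_le neg_one_lt_zero (Nat.cast_nonneg k))
  have h2 := h.const_mul (Real.sqrt (2 * Real.pi))⁻¹
  refine h2.congr (Filter.Eventually.of_forall fun x => ?_)
  simp only [gaussianPDFReal, NNReal.coe_one, mul_one]
  rw [Real.rpow_natCast, show (-(x - 0)^2/2 : ℝ) = -(1/2) * x^2 by ring]
  ring

lemma integrable_pow_gaussian (k : ℕ) :
    Integrable (fun x : ℝ => x ^ k) (gaussianReal 0 1) := by
  rw [gaussianReal_eq_withDensity]
  exact integrable_withDensity_ofReal (measurable_gaussianPDFReal 0 1)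
    (gaussianPDFReal_nonneg 0 1) (integrable_pdf_mul_pow_gaussian k)

lemma integral_id_gaussian : ∫ x, x ∂(gaussianReal 0 1) = 0 := by
  rw [gaussianReal_eq_withDensity, integral_withDensity_ofReal (measurable_gaussianPDFReal 0 1)
    (gaussianPDFReal_nonneg 0 1) _]
  set f : ℝ → ℝ := fun x => gaussianPDFReal 0 1 x * x with hf
  have hodd : ∀ x, f (-x) = - f x := by
    intro x
    simp only [hf, gaussianPDFReal, NNReal.coe_one, mul_one]
    rw [show ((-x - 0)^2 : ℝ) = (x - 0)^2 by ring]
    ring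
  have A : MeasurableEmbedding (fun x : ℝ => -x) :=
    (Homeomorph.neg ℝ).isClosedEmbedding.measurableEmbedding
  have h1 : ∫ x, f x = ∫ x, f (-x) := by
    conv_lhs => rw [← Measure.map_neg_eq_self (MeasureTheory.volume : Measure ℝ)]
    exact A.integral_map f
  have h2 : ∫ x, f (-x) = - ∫ x, f x := by
    simp_rw [hodd]
    exact integral_neg f
  linarith [h1.trans h2]

lemma Gamma_three_halves : Real.Gamma (3/2) = Real.sqrt Real.pi / 2 := by
  rw [show (3/2 : ℝ) = 1/2 + 1 by norm_num, Real.Gamma_add_one (by norm_num),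
    Real.Gamma_one_half_eq]
  ring

lemma integral_sq_gaussian : ∫ x, x ^ 2 ∂(gaussianReal 0 1) = 1 := by
  rw [gaussianReal_eq_withDensity, integral_withDensity_ofReal (measurable_gaussianPDFReal 0 1)
    (gaussianPDFReal_nonneg 0 1) _]
  set g : ℝ → ℝ := fun x => x ^ 2 * Real.exp (-(1/2) * x ^ 2) with hgdef
  have hg : (fun x : ℝ => gaussianPDFReal 0 1 x * x ^ 2)
      = fun x => (Real.sqrt (2 * Real.pi))⁻¹ * g x := by
    funext x
    simp only [hgdef, gaussianPDFReal, NNReal.coe_one, mul_one]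
    rw [show (-(x - 0)^2/2 : ℝ) = -(1/2) * x^2 by ring]
    ring
  have hgint : Integrable g := by
    have h := integrable_rpow_mul_exp_neg_mul_sq (by norm_num : (0:ℝ) < 1/2)
      (by norm_num : (-1:ℝ) < 2)
    refine h.congr (Filter.Eventually.of_forall fun x => ?_)
    have hx : x ^ (2:ℝ) = x ^ (2:ℕ) := by norm_cast
    simp [hgdef, hx]
  have heven : ∀ x, g (-x) = g x := by
    intro x
    simp only [hgdef]
    rw [show ((-x)^2 : ℝ) = x^2 by ring]
  have hsplit : ∫ x, g x = (∫ x in Set.Iic 0, g x) + ∫ x in Set.Ioi 0, g x :=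
    (intervalIntegral.integral_Iic_add_Ioi hgint.integrableOn hgint.integrableOn).symm
  have hleft : ∫ x in Set.Iic 0, g x = ∫ x in Set.Ioi 0, g x := by
    have : ∫ x in Set.Iic 0, g x = ∫ x in Set.Iic 0, g (-x) := by
      refine setIntegral_congr_fun measurableSet_Iic fun x _ => (heven x).symm
    rw [this, integral_comp_neg_Iic 0 g, neg_zero]
  have hIoi : ∫ x in Set.Ioi 0, g x
      = (1/2 : ℝ) ^ (-(2+1)/2 : ℝ) * (1/2) * Real.Gamma ((2+1)/2) := by
    rw [← integral_rpow_mul_exp_neg_mul_rpow (by norm_num : (0:ℝ) < 2)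
      (by norm_num : (-1:ℝ) < 2) (by norm_num : (0:ℝ) < 1/2)]
    refine setIntegral_congr_fun measurableSet_Ioi fun x _ => ?_
    have hx : x ^ (2:ℝ) = x ^ (2:ℕ) := by norm_cast
    simp [hgdef, hx]
  have hval : (1/2 : ℝ) ^ (-(2+1)/2 : ℝ) * (1/2) * Real.Gamma ((2+1)/2)
      = Real.sqrt 2 * Real.sqrt Real.pi / 2 := by
    rw [show ((2+1)/2 : ℝ) = 3/2 by norm_num, Gamma_three_halves]
    have h1 : (1/2 : ℝ) ^ (-(2+1)/2 : ℝ) = (2:ℝ) ^ ((3:ℝ)/2) := by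
      rw [one_div, show (-(2+1)/2 : ℝ) = -(3/2) by norm_num,
        Real.rpow_neg (by norm_num : (0:ℝ) ≤ 2⁻¹), Real.inv_rpow (by norm_num : (0:ℝ) ≤ 2),
        inv_inv]
    rw [h1, show ((3:ℝ)/2) = 1 + (1/2 : ℝ) by norm_num,
      Real.rpow_add (by norm_num : (0:ℝ) < 2), Real.rpow_one,
      ← Real.sqrt_eq_rpow]
    ring
  rw [hg, integral_const_mul, hsplit, hleft, hIoi, hval,
    Real.sqrt_mul (by norm_num : (0:ℝ) ≤ 2)]
  have h2 : Real.sqrt 2 * Real.sqrt Real.pi ≠ 0 := by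
    have := Real.sqrt_pos.mpr (by norm_num : (0:ℝ) < 2)
    have := Real.sqrt_pos.mpr Real.pi_pos
    positivity
  field_simp
  norm_num

lemma perm_prod {k : ℕ} (M : Matrix (Fin k) (Fin k) ℝ) (σ : Equiv.Perm (Fin k)) :
    ∏ i, M (σ i) i
      = ∏ p : Fin k × Fin k, (M p.1 p.2) ^ (if σ p.2 = p.1 then 1 else 0) := by
  classical
  have h1 : ∀ (p : Fin k × Fin k),
      (M p.1 p.2) ^ (if σ p.2 = p.1 then 1 else 0)
        = if σ p.2 = p.1 then M p.1 p.2 else 1 := by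
    intro p; split <;> simp
  simp_rw [h1]
  rw [← Finset.prod_filter]
  have h2 : Finset.univ.filter (fun p : Fin k × Fin k => σ p.2 = p.1)
      = Finset.univ.image (fun i => (σ i, i)) := by
    ext p
    simp only [Finset.mem_filter, Finset.mem_univ, true_and, Finset.mem_image]
    constructor
    · intro h; exact ⟨p.2, by rw [h]⟩
    · rintro ⟨i, rfl⟩; rfl
  rw [h2, Finset.prod_image (fun a _ b _ hab => by simpa using (Prod.mk.injEq _ _ _ _ ▸ hab).2)]

lemma integral_det_sq [IsProbabilityMeasure μ]
    {k : ℕ} (Z : Ω → Matrix (Fin k) (Fin k) ℝ)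
    (hmeas : ∀ i j, Measurable fun ω => Z ω i j)
    (hindep : iIndepFun
      (fun (p : Fin k × Fin k) ω => Z ω p.1 p.2) μ)
    (hdist : ∀ p : Fin k × Fin k, Measure.map (fun ω => Z ω p.1 p.2) μ = gaussianReal 0 1) :
    ∫ ω, (Z ω).det ^ 2 ∂μ = (k.factorial : ℝ) := by
  classical
  have hmom : ∀ (p : Fin k × Fin k) (e : ℕ),
      ∫ ω, (Z ω p.1 p.2) ^ e ∂μ = ∫ x, x ^ e ∂(gaussianReal 0 1) := by
    intro p e
    rw [← hdist p, integral_map (hmeas p.1 p.2).aemeasurable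
      (by exact (measurable_id.pow_const e).aestronglyMeasurable)]
  have hintE : ∀ (p : Fin k × Fin k) (e : ℕ),
      Integrable (fun ω => (Z ω p.1 p.2) ^ e) μ := by
    intro p e
    exact (integrable_map_measure (μ := μ) (f := fun ω => Z ω p.1 p.2)
      (g := fun x : ℝ => x ^ e)
      (by exact (measurable_id.pow_const e).aestronglyMeasurable)
      (hmeas p.1 p.2).aemeasurable).mp (by rw [hdist p]; exact integrable_pow_gaussian e)
  set e : Equiv.Perm (Fin k) → Equiv.Perm (Fin k) → (Fin k × Fin k) → ℕ :=
    fun σ τ p => (if σ p.2 = p.1 then 1 else 0) + (if τ p.2 = p.1 then 1 else 0) with he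
  have hexp : ∀ ω, (Z ω).det ^ 2
      = ∑ σ : Equiv.Perm (Fin k), ∑ τ : Equiv.Perm (Fin k),
          ((Equiv.Perm.sign σ : ℤ) : ℝ) * ((Equiv.Perm.sign τ : ℤ) : ℝ)
            * ∏ p : Fin k × Fin k, (Z ω p.1 p.2) ^ (e σ τ p) := by
    intro ω
    rw [Matrix.det_apply, sq, Finset.sum_mul_sum]
    refine Finset.sum_congr rfl fun σ _ => Finset.sum_congr rfl fun τ _ => ?_
    rw [perm_prod (Z ω) σ, perm_prod (Z ω) τ]
    simp only [he, pow_add, Finset.prod_mul_distrib, Units.smul_def, zsmul_eq_mul]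
    ring
  have hterm : ∀ σ τ : Equiv.Perm (Fin k),
      ∫ ω, ∏ p : Fin k × Fin k, (Z ω p.1 p.2) ^ (e σ τ p) ∂μ
        = if τ = σ then 1 else 0 := by
    intro σ τ
    have hind2 : iIndepFun
        (fun p ω => (Z ω p.1 p.2) ^ (e σ τ p)) μ :=
      hindep.comp (fun p x => x ^ (e σ τ p)) (fun p => measurable_id.pow_const _)
    rw [integral_finset_prod hind2 (fun p => (hmeas p.1 p.2).pow_const _) Finset.univ]
    by_cases hστ : τ = σ
    · subst hστ
      rw [if_pos rfl]
      refine Finset.prod_eq_one fun p _ => ?_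
      rcases eq_or_ne (τ p.2) p.1 with h | h
      · have : e τ τ p = 2 := by simp [he, h]
        rw [this, hmom, integral_sq_gaussian]
      · have : e τ τ p = 0 := by simp [he, h]
        rw [this]
        simp
    · rw [if_neg hστ]
      obtain ⟨i, hi⟩ : ∃ i, σ i ≠ τ i := by
        by_contra h
        push_neg at h
        exact hστ (Equiv.ext fun i => (h i).symm)
      refine Finset.prod_eq_zero (Finset.mem_univ (σ i, i)) ?_
      have : e σ τ (σ i, i) = 1 := by simp [he, Ne.symm hi]
      rw [this]
      simp only [pow_one]
      have h1 := hmom (σ i, i) 1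
      simp only [pow_one] at h1
      rw [h1, integral_id_gaussian]
  calc ∫ ω, (Z ω).det ^ 2 ∂μ
      = ∫ ω, ∑ σ : Equiv.Perm (Fin k), ∑ τ : Equiv.Perm (Fin k),
          ((Equiv.Perm.sign σ : ℤ) : ℝ) * ((Equiv.Perm.sign τ : ℤ) : ℝ)
            * ∏ p : Fin k × Fin k, (Z ω p.1 p.2) ^ (e σ τ p) ∂μ :=
        integral_congr_ae (Filter.Eventually.of_forall fun ω => hexp ω)
    _ = ∑ σ : Equiv.Perm (Fin k), ∑ τ : Equiv.Perm (Fin k),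
          ((Equiv.Perm.sign σ : ℤ) : ℝ) * ((Equiv.Perm.sign τ : ℤ) : ℝ)
            * ∫ ω, ∏ p : Fin k × Fin k, (Z ω p.1 p.2) ^ (e σ τ p) ∂μ := by
        rw [integral_finset_sum]
        · refine Finset.sum_congr rfl fun σ _ => ?_
          rw [integral_finset_sum]
          · exact Finset.sum_congr rfl fun τ _ => integral_const_mul _ _
          · intro τ _
            exact (integrable_finset_prod
              (hindep.comp (fun p x => x ^ (e σ τ p)) (fun p => measurable_id.pow_const _))
              (fun p => (hmeas p.1 p.2).pow_const _) (fun p => hintE p _) Finset.univ).const_mul _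
        · intro σ _
          apply integrable_finset_sum
          intro τ _
          exact (integrable_finset_prod
            (hindep.comp (fun p x => x ^ (e σ τ p)) (fun p => measurable_id.pow_const _))
            (fun p => (hmeas p.1 p.2).pow_const _) (fun p => hintE p _) Finset.univ).const_mul _
    _ = ∑ σ : Equiv.Perm (Fin k), (1 : ℝ) := by
        refine Finset.sum_congr rfl fun σ _ => ?_
        rw [Finset.sum_eq_single σ]
        · rw [hterm σ σ, if_pos rfl, mul_one]
          rcases Int.units_eq_one_or (Equiv.Perm.sign σ) with h | h <;> simp [h]
        · intro τ _ hτ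
          rw [hterm σ τ, if_neg hτ, mul_zero]
        · intro h
          exact absurd (Finset.mem_univ σ) h
    _ = (k.factorial : ℝ) := by
        rw [Finset.sum_const, Finset.card_univ, Fintype.card_perm, Fintype.card_fin]
        simp

lemma measurable_det_entries {k : ℕ} {α : Type*} [MeasurableSpace α]
    {f : α → Matrix (Fin k) (Fin k) ℝ} (hf : ∀ i j, Measurable fun a => f a i j) :
    Measurable fun a => (f a).det := by
  simp_rw [Matrix.det_apply, Units.smul_def, zsmul_eq_mul]
  exact Finset.measurable_sum _ fun σ _ =>
    (Finset.measurable_prod _ fun i _ => hf (σ i) i).const_mul _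

lemma prod_arith {n m c : ℕ} (hc : c ≤ m) (hmn : m ≤ n) :
    ∏ i : Fin m, (if (i:ℕ) < c then ((n:ℝ) - (i:ℕ)) * ((n:ℝ) - (i:ℕ) + 2) else ((n:ℝ) - (i:ℕ)))
      = ((n.factorial : ℝ) / ((n - m).factorial : ℝ))
        * (((n + 2).factorial : ℝ) / (((n + 2 - c).factorial : ℝ))) := by
  classical
  have hsplit : ∀ i : Fin m,
      (if (i:ℕ) < c then ((n:ℝ) - (i:ℕ)) * ((n:ℝ) - (i:ℕ) + 2) else ((n:ℝ) - (i:ℕ)))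
        = ((n:ℝ) - (i:ℕ)) * (if (i:ℕ) < c then ((n:ℝ) - (i:ℕ) + 2) else 1) := by
    intro i; split <;> ring
  simp_rw [hsplit]
  rw [Finset.prod_mul_distrib]
  have hA : ∏ i : Fin m, ((n:ℝ) - (i:ℕ)) = (n.descFactorial m : ℝ) := by
    rw [Fin.prod_univ_eq_prod_range (fun i => ((n:ℝ) - i)) m, Nat.descFactorial_eq_prod_range,
      Nat.cast_prod]
    refine Finset.prod_congr rfl fun x hx => ?_
    rw [Nat.cast_sub (le_trans (le_of_lt (Finset.mem_range.mp hx)) hmn)]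
  have hB : ∏ i : Fin m, (if (i:ℕ) < c then ((n:ℝ) - (i:ℕ) + 2) else 1)
      = ((n + 2).descFactorial c : ℝ) := by
    rw [Fin.prod_univ_eq_prod_range (fun x => if x < c then ((n:ℝ) - x + 2) else 1) m,
      ← Finset.prod_filter]
    have hfilt : (Finset.range m).filter (fun x => x < c) = Finset.range c := by
      ext x
      simp only [Finset.mem_filter, Finset.mem_range]
      omega
    rw [hfilt, Nat.descFactorial_eq_prod_range, Nat.cast_prod]
    refine Finset.prod_congr rfl fun x hx => ?_
    have hx' : x < c := Finset.mem_range.mp hx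
    rw [Nat.cast_sub (by omega : x ≤ n + 2)]
    push_cast
    ring
  rw [hA, hB]
  have h1 : (n.factorial : ℝ) / ((n - m).factorial : ℝ) = (n.descFactorial m : ℝ) := by
    have := Nat.factorial_mul_descFactorial hmn
    have h0 : (((n - m).factorial : ℕ) : ℝ) ≠ 0 := Nat.cast_ne_zero.mpr (Nat.factorial_ne_zero _)
    field_simp
    exact_mod_cast this.symm
  have h2 : ((n + 2).factorial : ℝ) / ((n + 2 - c).factorial : ℝ)
      = ((n + 2).descFactorial c : ℝ) := by
    have := Nat.factorial_mul_descFactorial (show c ≤ n + 2 by omega)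
    have h0 : (((n + 2 - c).factorial : ℕ) : ℝ) ≠ 0 :=
      Nat.cast_ne_zero.mpr (Nat.factorial_ne_zero _)
    field_simp
    exact_mod_cast this.symm
  rw [h1, h2]

end WishartAux

open WishartAux

theorem second_moment_wishart_minor_representation
    {Ω : Type*} [MeasurableSpace Ω] (μ : Measure Ω) [IsProbabilityMeasure μ]
    {n m c : ℕ} (hc : c ≤ m) (hmn : m ≤ n)
    (W : Fin m → Ω → ℝ) (Z : Ω → Matrix (Fin (m - c)) (Fin (m - c)) ℝ)
    (hmeasW : ∀ i, Measurable (W i))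
    (hmeasZ : ∀ i j, Measurable fun ω => Z ω i j)
    (hindep : iIndepFun
      (Sum.elim W (fun (p : Fin (m - c) × Fin (m - c)) ω => Z ω p.1 p.2)) μ)
    (hWdist : ∀ i : Fin m,
      Measure.map (W i) μ = gammaMeasure (((n : ℝ) - (i : ℕ)) / 2) (1 / 2))
    (hZdist : ∀ p : Fin (m - c) × Fin (m - c),
      Measure.map (fun ω => Z ω p.1 p.2) μ = gaussianReal 0 1) :
    ∫ ω, ((∏ i ∈ Finset.univ.filter (fun i : Fin m => (i : ℕ) < c), W i ω)
          * (∏ i ∈ Finset.univ.filter (fun i : Fin m => c ≤ (i : ℕ)),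
              Real.sqrt (W i ω))
          * (Z ω).det) ^ 2 ∂μ
      = ((n.factorial : ℝ) / ((n - m).factorial : ℝ))
        * (((n + 2).factorial : ℝ) / ((n + 2 - c).factorial : ℝ))
        * ((m - c).factorial : ℝ) := by
  classical
  set F : Fin m ⊕ (Fin (m - c) × Fin (m - c)) → Ω → ℝ :=
    Sum.elim W (fun p ω => Z ω p.1 p.2) with hF
  have hmeasF : ∀ j, Measurable (F j) := by
    rintro (i | p)
    · exact hmeasW i
    · exact hmeasZ p.1 p.2
  set g : Fin m → ℝ → ℝ := fun i x => if (i : ℕ) < c then x ^ 2 else Real.sqrt x ^ 2 with hg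
  have hgmeas : ∀ i, Measurable (g i) := by
    intro i
    by_cases h : (i : ℕ) < c
    · simpa [hg, h] using (measurable_id.pow_const 2 : Measurable fun x : ℝ => x ^ 2)
    · simpa [hg, h] using (Real.continuous_sqrt.measurable.pow_const 2)
  set X : Ω → ℝ := fun ω => ∏ i : Fin m, g i (W i ω) with hX
  set Y : Ω → ℝ := fun ω => (Z ω).det ^ 2 with hY
  -- pointwise rewrite of the integrand
  have hpt : ∀ ω, ((∏ i ∈ Finset.univ.filter (fun i : Fin m => (i : ℕ) < c), W i ω)
        * (∏ i ∈ Finset.univ.filter (fun i : Fin m => c ≤ (i : ℕ)), Real.sqrt (W i ω))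
        * (Z ω).det) ^ 2 = X ω * Y ω := by
    intro ω
    rw [mul_pow, mul_pow, ← Finset.prod_pow, ← Finset.prod_pow]
    have h1 : Finset.univ.filter (fun i : Fin m => c ≤ (i : ℕ))
        = Finset.univ.filter (fun i : Fin m => ¬ (i : ℕ) < c) := by
      apply Finset.filter_congr; intro i _; simp [not_lt]
    rw [h1]
    have h2 : ∀ i ∈ Finset.univ.filter (fun i : Fin m => (i : ℕ) < c),
        W i ω ^ 2 = g i (W i ω) := by
      intro i hi
      simp only [Finset.mem_filter, Finset.mem_univ, true_and] at hi
      simp [hg, hi]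
    have h3 : ∀ i ∈ Finset.univ.filter (fun i : Fin m => ¬ (i : ℕ) < c),
        Real.sqrt (W i ω) ^ 2 = g i (W i ω) := by
      intro i hi
      simp only [Finset.mem_filter, Finset.mem_univ, true_and] at hi
      simp [hg, hi]
    rw [Finset.prod_congr rfl h2, Finset.prod_congr rfl h3,
      Finset.prod_filter_mul_prod_filter_not]
  have hXmeas : Measurable X :=
    Finset.measurable_prod _ fun i _ => (hgmeas i).comp (hmeasW i)
  have hYmeas : Measurable Y :=
    (measurable_det_entries hmeasZ).pow_const 2
  -- independence of X and Y
  have hXY : IndepFun X Y μ := by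
    set S : Finset (Fin m ⊕ (Fin (m - c) × Fin (m - c))) := Finset.univ.image Sum.inl with hS
    set T : Finset (Fin m ⊕ (Fin (m - c) × Fin (m - c))) := Finset.univ.image Sum.inr with hT
    have hdisj : Disjoint S T := by
      rw [Finset.disjoint_left]
      rintro j hjS hjT
      simp only [hS, hT, Finset.mem_image, Finset.mem_univ, true_and] at hjS hjT
      obtain ⟨i, rfl⟩ := hjS
      obtain ⟨p, hp⟩ := hjT
      exact Sum.inr_ne_inl hp
    have hbase := hindep.indepFun_finset S T hdisj hmeasF
    have hmemS : ∀ i : Fin m, (Sum.inl i : Fin m ⊕ (Fin (m - c) × Fin (m - c))) ∈ S :=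
      fun i => Finset.mem_image_of_mem _ (Finset.mem_univ i)
    have hmemT : ∀ p : Fin (m - c) × Fin (m - c),
        (Sum.inr p : Fin m ⊕ (Fin (m - c) × Fin (m - c))) ∈ T :=
      fun p => Finset.mem_image_of_mem _ (Finset.mem_univ p)
    set φ : ({x // x ∈ S} → ℝ) → ℝ :=
      fun v => ∏ i : Fin m, g i (v ⟨Sum.inl i, hmemS i⟩) with hφdef
    set ψ : ({x // x ∈ T} → ℝ) → ℝ :=
      fun v => (Matrix.det (Matrix.of fun a b => v ⟨Sum.inr (a, b), hmemT (a, b)⟩)) ^ 2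
        with hψdef
    have hφmeas : Measurable φ :=
      Finset.measurable_prod _ fun i _ => (hgmeas i).comp (measurable_pi_apply _)
    have hψmeas : Measurable ψ := by
      refine Measurable.pow_const ?_ 2
      exact measurable_det_entries (fun a b => measurable_pi_apply _)
    exact hbase.comp hφmeas hψmeas
  rw [integral_congr_ae (Filter.Eventually.of_forall hpt),
    hXY.integral_fun_mul_eq_mul_integral hXmeas.aestronglyMeasurable hYmeas.aestronglyMeasurable]
  -- the Z part
  have hindepZ : iIndepFun (fun (p : Fin (m - c) × Fin (m - c)) ω => Z ω p.1 p.2) μ :=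
    iIndepFun_precomp (Sum.inr : Fin (m - c) × Fin (m - c) → _) Sum.inr_injective hindep
  have hYint : ∫ ω, Y ω ∂μ = ((m - c).factorial : ℝ) :=
    integral_det_sq Z hmeasZ hindepZ hZdist
  -- the W part
  have hindepW : iIndepFun W μ :=
    iIndepFun_precomp (Sum.inl : Fin m → _) Sum.inl_injective hindep
  have hindepgW : iIndepFun
      (fun i ω => g i (W i ω)) μ := hindepW.comp g hgmeas
  have hXint : ∫ ω, X ω ∂μ = ∏ i : Fin m, ∫ ω, g i (W i ω) ∂μ :=
    integral_finset_prod hindepgW (fun i => (hgmeas i).comp (hmeasW i)) Finset.univ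
  have hfac : ∀ i : Fin m, ∫ ω, g i (W i ω) ∂μ
      = (if (i:ℕ) < c then ((n:ℝ) - (i:ℕ)) * ((n:ℝ) - (i:ℕ) + 2) else ((n:ℝ) - (i:ℕ))) := by
    intro i
    have hin : ((i:ℕ) : ℝ) < (n : ℝ) := by exact_mod_cast lt_of_lt_of_le i.isLt hmn
    have ha0 : 0 < ((n : ℝ) - (i : ℕ)) / 2 := by linarith
    have hΓa : Real.Gamma (((n : ℝ) - (i : ℕ)) / 2) ≠ 0 :=
      (Real.Gamma_pos_of_pos ha0).ne'
    by_cases hic : (i : ℕ) < c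
    · rw [if_pos hic]
      have hgeq : ∀ ω, g i (W i ω) = (W i ω) ^ 2 := fun ω => by simp [hg, hic]
      simp_rw [hgeq]
      rw [show (∫ ω, (W i ω) ^ 2 ∂μ) = ∫ x, x ^ 2 ∂(Measure.map (W i) μ) from
        (integral_map (hmeasW i).aemeasurable
          (measurable_id.pow_const 2).aestronglyMeasurable).symm,
        hWdist i, integral_pow_gammaMeasure ha0 (by norm_num) (by norm_num : 1 ≤ 2)]
      rw [show ((n : ℝ) - (i : ℕ)) / 2 + (2:ℕ) = (((n : ℝ) - (i : ℕ)) / 2 + 1) + 1 by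
          push_cast; ring,
        Real.Gamma_add_one (by positivity), Real.Gamma_add_one ha0.ne']
      field_simp
    · rw [if_neg hic]
      have hgeq : ∀ ω, g i (W i ω) = Real.sqrt (W i ω) ^ 2 := fun ω => by simp [hg, hic]
      simp_rw [hgeq]
      rw [show (∫ ω, Real.sqrt (W i ω) ^ 2 ∂μ) = ∫ x, Real.sqrt x ^ 2 ∂(Measure.map (W i) μ)
          from (integral_map (hmeasW i).aemeasurable
          ((Real.continuous_sqrt.measurable.pow_const 2).aestronglyMeasurable)).symm,
        hWdist i, integral_sqrt_sq_gammaMeasure,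
        integral_pow_gammaMeasure ha0 (by norm_num) (le_refl 1)]
      rw [show ((n : ℝ) - (i : ℕ)) / 2 + (1:ℕ) = (((n : ℝ) - (i : ℕ)) / 2) + 1 by push_cast; ring,
        Real.Gamma_add_one ha0.ne']
      field_simp

  rw [hXint, hYint, Finset.prod_congr rfl (fun i _ => hfac i), prod_arith hc hmn]
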